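/- For every n ∈ ℕ, Crit_n is isomorphic to Step^O_n({End(w)}) ∪ {S₀(w,w)}, where two atom sets are isomorphic if there is a homomorphism between them that is injective and whose inverse is also a homomorphism. -/

import Mathlib

set_option maxHeartbeats 1000000
set_option synthInstance.maxHeartbeats 1000000
set_option synthInstance.maxSize 512

attribute [local instance] Classical.propDecidable

noncomputable section

/-! ### Terms and atoms -/

/-- Variables: ordinary variables `Sum.inl n`, or fresh variables `Sum.inr (c, k)`
introduced by the trigger with code `c` for the head variable with code `k`. -/
abbrev Var : Type := ℕ ⊕ (ℕ × ℕ)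

/-- Terms: constants `Sum.inl c` or variables `Sum.inr v`. -/
abbrev FTerm : Type := ℕ ⊕ Var

def ct (n : ℕ) : FTerm := Sum.inl n
def vt (n : ℕ) : FTerm := Sum.inr (Sum.inl n)

/-- An atom: a predicate name together with its list of arguments. -/
abbrev Atom : Type := ℕ × List FTerm

/-- Active domain: all terms occurring in an atom set. -/
def adom (J : Set Atom) : Set FTerm := {t | ∃ a ∈ J, t ∈ a.2}

def atomVarsF (a : Atom) : Finset Var := (a.2.filterMap Sum.getRight?).toFinset

def varsF (A : Finset Atom) : Finset Var := A.biUnion atomVarsF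

def setVars (J : Set Atom) : Set Var := {v | ∃ a ∈ J, Sum.inr v ∈ a.2}

/-! ### Substitutions and homomorphisms -/

abbrev Subst := Var → FTerm

def applyT (σ : Subst) : FTerm → FTerm
  | Sum.inl c => Sum.inl c
  | Sum.inr v => σ v

def applyA (σ : Subst) (a : Atom) : Atom := (a.1, a.2.map (applyT σ))

def IsHomOn (σ : Subst) (A B : Set Atom) : Prop := ∀ a ∈ A, applyA σ a ∈ B

def HomBetween (A B : Set Atom) : Prop := ∃ σ : Subst, IsHomOn σ A B

def IsRetraction (σ : Subst) (A B : Set Atom) : Prop :=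
  IsHomOn σ A B ∧ ∀ v ∈ setVars A ∩ setVars B, σ v = Sum.inr v

/-- Isomorphism of atom sets: a pair of mutually inverse homomorphisms. -/
def Isomorphic (A B : Set Atom) : Prop :=
  ∃ σ τ : Subst, IsHomOn σ A B ∧ IsHomOn τ B A ∧
    (∀ a ∈ A, applyA τ (applyA σ a) = a) ∧ (∀ b ∈ B, applyA σ (applyA τ b) = b)

/-! ### Rules -/

/-- A rule is a pair (body, head). Its existential variables are the head variables
not occurring in the body; its frontier the variables shared by body and head.
A rule is Datalog when every head variable occurs in the body. -/
abbrev Rule : Type := Finset Atom × Finset Atom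

def frontierOf (R : Rule) : Finset Var := varsF R.1 ∩ varsF R.2

def DatRules (Rset : Finset Rule) : Finset Rule := Rset.filter fun R => varsF R.2 ⊆ varsF R.1
def NDatRules (Rset : Finset Rule) : Finset Rule := Rset.filter fun R => ¬ varsF R.2 ⊆ varsF R.1

/-- Satisfaction of a rule in an atom set. -/
def SatisfiesRule (J : Set Atom) (R : Rule) : Prop :=
  ∀ σ : Subst, IsHomOn σ (R.1 : Set Atom) J →
    ∃ σ' : Subst, (∀ v ∈ varsF R.1, σ' v = σ v) ∧ IsHomOn σ' (R.2 : Set Atom) J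

def IsModel (Rset : Finset Rule) (I J : Set Atom) : Prop :=
  (∀ R ∈ Rset, SatisfiesRule J R) ∧ HomBetween I J

/-- BCQ entailment: every model of the KB satisfies the query. -/
def Entails (Rset : Finset Rule) (I q : Set Atom) : Prop :=
  ∀ J : Set Atom, IsModel Rset I J → HomBetween q J

def IsUniversalModel (Rset : Finset Rule) (I U : Set Atom) : Prop :=
  IsModel Rset I U ∧ ∀ J : Set Atom, IsModel Rset I J → HomBetween U J

/-! ### Triggers -/

structure Trigger where
  rule : Rule
  sub : Subst

/-- Injective code of a trigger (a trigger is determined by its rule and the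
restriction of its substitution to the body variables). -/
def Trigger.code (t : Trigger) : ℕ :=
  Encodable.encode (t.rule, (varsF t.rule.1).image fun v => (v, t.sub v))

/-- The canonical extension of the trigger substitution, mapping each existential
variable `z` to the fresh variable unique for `z` and the trigger. -/
def Trigger.extSub (t : Trigger) : Subst := fun v =>
  if v ∈ varsF t.rule.1 then t.sub v
  else Sum.inr (Sum.inr (t.code, Encodable.encode v))

def Trigger.out (t : Trigger) : Finset Atom := t.rule.2.image (applyA t.extSub)

def Trigger.isOn (t : Trigger) (J : Set Atom) : Prop := IsHomOn t.sub (t.rule.1 : Set Atom) J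

/-! ### Chase variants, derivations, chase termination classes -/

inductive ChaseVariant : Type
  | O | SO | R | E
deriving DecidableEq

def Applicable : ChaseVariant → Trigger → Set Atom → Prop
  | .O, t, J => ¬ ((t.out : Set Atom) ⊆ J)
  | .SO, t, J => ∀ t' : Trigger, t'.rule = t.rule → t'.isOn J →
      (∀ v ∈ frontierOf t.rule, t'.sub v = t.sub v) → ¬ ((t'.out : Set Atom) ⊆ J)
  | .R, t, J => ¬ ∃ σ : Subst, IsRetraction σ (J ∪ (t.out : Set Atom)) J
  | .E, t, J => ¬ ∃ σ : Subst, IsHomOn σ (J ∪ (t.out : Set Atom)) J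

def instSeq (I : Set Atom) (steps : ℕ → Option Trigger) : ℕ → Set Atom
  | 0 => I
  | n + 1 => instSeq I steps n ∪
      (match steps n with
        | none => (∅ : Set Atom)
        | some t => (t.out : Set Atom))

/-- A (possibly infinite) derivation from the knowledge base `⟨Rset, I⟩`. -/
structure Deriv (Rset : Finset Rule) (I : Set Atom) where
  steps : ℕ → Option Trigger
  prefix_closed : ∀ n, steps n = none → steps (n + 1) = none
  valid : ∀ n t, steps n = some t →
    t.rule ∈ Rset ∧ t.isOn (instSeq I steps n) ∧ ¬ ((t.out : Set Atom) ⊆ instSeq I steps n)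

def Deriv.inst {Rset : Finset Rule} {I : Set Atom} (D : Deriv Rset I) (n : ℕ) :
    Set Atom := instSeq I D.steps n

def Deriv.res {Rset : Finset Rule} {I : Set Atom} (D : Deriv Rset I) : Set Atom :=
  ⋃ n, D.inst n

def Deriv.Finite {Rset : Finset Rule} {I : Set Atom} (D : Deriv Rset I) : Prop :=
  ∃ n, D.steps n = none

def Deriv.IsX {Rset : Finset Rule} {I : Set Atom} (X : ChaseVariant)
    (D : Deriv Rset I) : Prop :=
  ∀ n t, D.steps n = some t → Applicable X t (D.inst n)

def Deriv.Fair {Rset : Finset Rule} {I : Set Atom} (X : ChaseVariant)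
    (D : Deriv Rset I) : Prop :=
  ∀ i, ∀ t : Trigger, t.rule ∈ Rset → t.isOn (D.inst i) → Applicable X t (D.inst i) →
    ∃ j, i < j ∧ ¬ Applicable X t (D.inst j)

/-- All-instance, all-derivation chase termination. -/
def CTall (X : ChaseVariant) (Rset : Finset Rule) : Prop :=
  ∀ I : Finset Atom, ∀ D : Deriv Rset (I : Set Atom), D.IsX X → D.Fair X → D.Finite

/-- All-instance, some-derivation chase termination. -/
def CTex (X : ChaseVariant) (Rset : Finset Rule) : Prop :=
  ∀ I : Finset Atom, ∃ D : Deriv Rset (I : Set Atom), D.IsX X ∧ D.Fair X ∧ D.Finite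

inductive CTQuant : Type
  | all | ex

def CT (X : ChaseVariant) : CTQuant → Finset Rule → Prop
  | .all => CTall X
  | .ex => CTex X

/-- The result of some fair `X`-derivation from `⟨Rset, J⟩`. -/
def ChX (X : ChaseVariant) (Rset : Finset Rule) (J : Set Atom) : Set Atom :=
  if h : ∃ D : Deriv Rset J, D.IsX X ∧ D.Fair X then h.choose.res else J

/-! ### Gaifman graph, treewidth, bts -/

def gaifmanAdj (J : Set Atom) (u v : FTerm) : Prop :=
  u ≠ v ∧ ∃ a ∈ J, u ∈ a.2 ∧ v ∈ a.2

/-- The (Gaifman graph of the) atom set `J` has treewidth at most `k`: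
there is a tree decomposition all of whose bags have size at most `k + 1`. -/
def TreewidthAtMost (J : Set Atom) (k : ℕ) : Prop :=
  ∃ (ι : Type) (T : SimpleGraph ι) (bag : ι → Finset FTerm),
    T.Connected ∧ T.IsAcyclic ∧
    (∀ v ∈ adom J, ∃ i, v ∈ bag i) ∧
    (∀ u v : FTerm, gaifmanAdj J u v → ∃ i, u ∈ bag i ∧ v ∈ bag i) ∧
    (∀ v : FTerm, (SimpleGraph.induce {i | v ∈ bag i} T).Preconnected) ∧
    (∀ i, (bag i).card ≤ k + 1)

/-- Bounded-treewidth sets: for every instance, some universal model of bounded treewidth. -/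
def IsBts (Rset : Finset Rule) : Prop :=
  ∀ I : Finset Atom, ∃ (k : ℕ) (U : Set Atom),
    IsUniversalModel Rset (I : Set Atom) U ∧ TreewidthAtMost U k

/-! ### Three-counter machines -/

/-- A three-counter machine: states `0, …, m − 1` (state `0` is initial, standing for `q₁`),
and a partial transition function given by a finite table. -/
structure TCM where
  m : ℕ
  hm : 0 < m
  δ : List ((ℕ × Bool × Bool) × (ℕ × Int × Int))
  keys_nodup : (δ.map Prod.fst).Nodup
  wf : ∀ e ∈ δ, e.1.1 < m ∧ e.2.1 < m ∧ e.2.2.1.natAbs ≤ 1 ∧ e.2.2.2.natAbs ≤ 1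

/-- A configuration: state, two counters, and the time counter. -/
abbrev Config : Type := ℕ × ℕ × ℕ × ℕ

def TCM.step (M : TCM) (q : ℕ) (b1 b2 : Bool) : Option (ℕ × Int × Int) :=
  (M.δ.find? fun e => decide (e.1 = (q, b1, b2))).map Prod.snd

def TCM.next (M : TCM) (C : Config) : Option Config :=
  match M.step C.1 (decide (C.2.1 ≠ 0)) (decide (C.2.2.1 ≠ 0)) with
  | none => none
  | some (q', d1, d2) =>
      some (q', ((C.2.1 : ℤ) + d1).toNat, ((C.2.2.1 : ℤ) + d2).toNat, C.2.2.2 + 1)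

def TCM.run (M : TCM) : ℕ → Option Config
  | 0 => some (0, 0, 0, 0)
  | n + 1 => (M.run n).bind M.next

/-- The machine halts: some reachable configuration has no successor. -/
def TCM.Halts (M : TCM) : Prop := ∃ n C, M.run n = some C ∧ M.next C = none

/-! ### Prime encoding of configurations -/

/-- The least prime strictly greater than `n` (computably). -/
def nextPrime (n : ℕ) : ℕ := Nat.find (Nat.exists_infinite_primes (n + 1))

/-- `prm i` is the `(i+1)`-st prime `p_{i+1}`, i.e. `prm 0 = 2`. -/
def prm : ℕ → ℕ
  | 0 => 2
  | k + 1 => nextPrime (prm k)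

/-- Encoding of a configuration as a natural number. -/
def TCM.enc (M : TCM) (C : Config) : ℕ :=
  prm C.1 * prm M.m ^ C.2.1 * prm (M.m + 1) ^ C.2.2.1 * prm (M.m + 2) ^ C.2.2.2

/-- `p = p₁ ⋯ p_{m+3}`. -/
def TCM.p (M : TCM) : ℕ := ∏ i ∈ Finset.range (M.m + 3), prm i

/-- Decode the state from a residue modulo `M.p`. -/
def TCM.stateOf (M : TCM) (i : ℕ) : Option ℕ :=
  (List.range M.m).find? fun s => decide (prm s ∣ i)

/-- The canonical pair `(q_i, r_i)` realizing the prime encoding of the transitions. -/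
def TCM.qr (M : TCM) (i : ℕ) : ℕ × ℕ :=
  match M.stateOf i with
  | none => (1, 1)
  | some s =>
      let b1 : Bool := decide (prm M.m ∣ i)
      let b2 : Bool := decide (prm (M.m + 1) ∣ i)
      match M.step s b1 b2 with
      | none => (1, 1)
      | some (s', d1, d2) =>
          let e1 : ℤ := if b1 then d1 else max d1 0
          let e2 : ℤ := if b2 then d2 else max d2 0
          let num : ℕ := prm s' * prm (M.m + 2) *
            (if e1 = 1 then prm M.m else 1) * (if e2 = 1 then prm (M.m + 1) else 1)
          let den : ℕ := prm s *
            (if e1 = -1 then prm M.m else 1) * (if e2 = -1 then prm (M.m + 1) else 1)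
          (num / Nat.gcd num den, den / Nat.gcd num den)

def TCM.qi (M : TCM) (i : ℕ) : ℕ := (M.qr i).1
def TCM.ri (M : TCM) (i : ℕ) : ℕ := (M.qr i).2

/-- `g(n) = q_{n mod p} · n / r_{n mod p}`. -/
def TCM.g (M : TCM) (n : ℕ) : ℕ := M.qi (n % M.p) * n / M.ri (n % M.p)

/-- `gᵏ(2)`. -/
def TCM.gIter (M : TCM) (k : ℕ) : ℕ := (M.g)^[k] 2

/-- `G = {gᵏ(2) : k ∈ ℕ}`. -/
def TCM.Gset (M : TCM) : Set ℕ := Set.range M.gIter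

/-! ### The rule set `R_M` -/

def pEnd : ℕ := 0
def pFlood : ℕ := 1
def pS0 : ℕ := 2
def pS : ℕ := 3
def pG : ℕ := 4
def pR (i : ℕ) : ℕ := 5 + 2 * i
def pT (i : ℕ) : ℕ := 6 + 2 * i

/-- `j`-th vertex of an `S`-path of length `n` from variable `a` to variable `b`
with fresh intermediate variables `base + 1, …, base + n − 1`. -/
def pathVar (a b base n j : ℕ) : FTerm :=
  if j = 0 then vt a else if j = n then vt b else vt (base + j)

/-- The atoms of `Sⁿ(x_a, x_b)`: an `S`-path of length `n`. -/
def spath (a b base n : ℕ) : Finset Atom :=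
  (Finset.range n).image fun j =>
    (pS, [pathVar a b base n j, pathVar a b base n (j + 1)])

/-- Rule (1): `S₀(x,y) → S(x,y)`. -/
def ruleS : Rule := ({(pS0, [vt 0, vt 1])}, {(pS, [vt 0, vt 1])})

/-- Rule (2): `R_i(x,y) ∧ S(y,z) → R_{i+1}(x,z)` (indices modulo `p`). -/
def ruleR (M : TCM) (i : ℕ) : Rule :=
  ({(pR i, [vt 0, vt 1]), (pS, [vt 1, vt 2])}, {(pR ((i + 1) % M.p), [vt 0, vt 2])})

/-- Rule (3): `T_i(x,y,z) ∧ S^{r_i}(y,y′) ∧ S^{q_i}(z,z′) → T_i(x,y′,z′)`. -/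
def ruleT (M : TCM) (i : ℕ) : Rule :=
  (({(pT i, [vt 0, vt 1, vt 2])} : Finset Atom) ∪ spath 1 3 10 (M.ri i) ∪
      spath 2 4 (11 + M.ri i) (M.qi i),
    {(pT i, [vt 0, vt 3, vt 4])})

/-- Rule (4): `S(x,y) → Flood(y)`. -/
def ruleFloodProp : Rule := ({(pS, [vt 0, vt 1])}, {(pFlood, [vt 1])})

/-- Rule (5): `End(x) → S(x,x)`. -/
def ruleSEnd : Rule := ({(pEnd, [vt 0])}, {(pS, [vt 0, vt 0])})

/-- Rule (6): `S²(x,y) → G(x,y)`. -/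
def ruleGInit : Rule := (spath 0 1 10 2, {(pG, [vt 0, vt 1])})

/-- Rule (7): `G(x,y) ∧ R_i(x,y) ∧ T_i(x,y,z) → G(x,z)`. -/
def ruleGStep (i : ℕ) : Rule :=
  ({(pG, [vt 0, vt 1]), (pR i, [vt 0, vt 1]), (pT i, [vt 0, vt 1, vt 2])},
    {(pG, [vt 0, vt 2])})

/-- Rule (8): `Flood(x) ∧ Flood(y) ∧ Flood(z) → G(x,y) ∧ ⋀_{j<p} (R_j(x,y) ∧ T_j(x,y,z))`. -/
def ruleFloodGen (M : TCM) : Rule :=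
  ({(pFlood, [vt 0]), (pFlood, [vt 1]), (pFlood, [vt 2])},
    ({(pG, [vt 0, vt 1])} : Finset Atom) ∪
      (Finset.range M.p).biUnion fun j =>
        {(pR j, [vt 0, vt 1]), (pT j, [vt 0, vt 1, vt 2])})

/-- Rule (9): `G(y,z) ∧ End(z) → ∃x (S₀(x,y) ∧ R₀(x,x) ∧ ⋀_{j<p} T_j(x,x,x))`. -/
def ruleEx (M : TCM) : Rule :=
  ({(pG, [vt 1, vt 2]), (pEnd, [vt 2])},
    ({(pS0, [vt 0, vt 1]), (pR 0, [vt 0, vt 0])} : Finset Atom) ∪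
      (Finset.range M.p).biUnion fun j => {(pT j, [vt 0, vt 0, vt 0])})

/-- The rule set `R_M`. -/
def RM (M : TCM) : Finset Rule :=
  ({ruleS, ruleFloodProp, ruleSEnd, ruleGInit, ruleFloodGen M, ruleEx M} : Finset Rule) ∪
    (Finset.range M.p).biUnion fun i => {ruleR M i, ruleT M i, ruleGStep i}

/-- The alternating Datalog/non-Datalog chase steps `Step^X_n`. -/
def StepX (X : ChaseVariant) (M : TCM) : ℕ → Set Atom → Set Atom
  | 0, I => ChX X (DatRules (RM M)) I
  | n + 1, I => ChX X (DatRules (RM M)) (ChX X (NDatRules (RM M)) (StepX X M n I))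

/-- The constant `w`, the "well of positivity". -/
def wC : FTerm := ct 0

/-- The instance `{End(w)}`. -/
def IE : Set Atom := {(pEnd, [wC])}

/-- Membership in the signature of `R_M` (predicate together with its arity). -/
def InSig (M : TCM) (a : Atom) : Prop :=
  ((a.1 = pEnd ∨ a.1 = pFlood) ∧ a.2.length = 1) ∨
  ((a.1 = pS0 ∨ a.1 = pS ∨ a.1 = pG ∨ ∃ i < M.p, a.1 = pR i) ∧ a.2.length = 2) ∨
  ((∃ i < M.p, a.1 = pT i) ∧ a.2.length = 3)

/-- The critical instance: all atoms `P(w, …, w)` over the signature of `R_M`. -/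
def Crit (M : TCM) : Set Atom := {a | InSig M a ∧ ∀ t ∈ a.2, t = wC}

/-- An `S`-path of length `k` from `s` to `t` in `J`. -/
def SPath (J : Set Atom) : ℕ → FTerm → FTerm → Prop
  | 0, s, t => s = t
  | k + 1, s, t => ∃ u, (pS, [s, u]) ∈ J ∧ SPath J k u t

/-- The restriction `J|_S`: atoms of `J` all of whose terms belong to `S`. -/
def restrictTo (J : Set Atom) (S : Set FTerm) : Set Atom := {a ∈ J | ∀ t ∈ a.2, t ∈ S}

/-- An explicit injective encoding of three-counter machines by natural numbers. -/
def encodeTCM (M : TCM) : ℕ := Encodable.encode (M.m, M.δ)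

namespace Stmt5

/-! ### Least-fixpoint characterization of the oblivious chase -/

def Closed (Rset : Finset Rule) (J : Set Atom) : Prop :=
  ∀ t : Trigger, t.rule ∈ Rset → t.isOn J → (t.out : Set Atom) ⊆ J

def ClO (Rset : Finset Rule) (I : Set Atom) : Set Atom :=
  ⋂₀ {J | I ⊆ J ∧ Closed Rset J}

lemma subset_ClO (Rset : Finset Rule) (I : Set Atom) : I ⊆ ClO Rset I :=
  fun _ ha _ hJ => hJ.1 ha

lemma ClO_min {Rset : Finset Rule} {I J : Set Atom} (hIJ : I ⊆ J) (hJ : Closed Rset J) :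
    ClO Rset I ⊆ J := fun _ ha => ha J ⟨hIJ, hJ⟩

lemma isOn_mono {t : Trigger} {J K : Set Atom} (h : J ⊆ K) (hOn : t.isOn J) : t.isOn K :=
  fun a ha => h (hOn a ha)

lemma ClO_closed (Rset : Finset Rule) (I : Set Atom) : Closed Rset (ClO Rset I) := by
  intro t ht hOn a haout J hJ
  exact hJ.2 t ht (isOn_mono (fun x hx => Set.mem_sInter.mp hx J hJ) hOn) haout

lemma ClO_mono {Rset : Finset Rule} {I I' : Set Atom} (h : I ⊆ I') :
    ClO Rset I ⊆ ClO Rset I' :=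
  ClO_min (h.trans (subset_ClO _ _)) (ClO_closed _ _)

/-! ### Congruence lemmas -/

lemma applyA_congr {σ σ' : Subst} {a : Atom} (h : ∀ v ∈ atomVarsF a, σ v = σ' v) :
    applyA σ a = applyA σ' a := by
  unfold applyA
  congr 1
  apply List.map_congr_left
  intro x hx
  cases x with
  | inl c => rfl
  | inr v =>
    have hv : v ∈ atomVarsF a := by
      simp only [atomVarsF, List.mem_toFinset, List.mem_filterMap]
      exact ⟨Sum.inr v, hx, rfl⟩
    simp only [applyT]
    exact h v hv

lemma atomVarsF_subset_varsF {A : Finset Atom} {a : Atom} (ha : a ∈ A) :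
    atomVarsF a ⊆ varsF A := fun v hv => Finset.mem_biUnion.mpr ⟨a, ha, hv⟩

lemma trig_congr {t t' : Trigger} (hr : t'.rule = t.rule)
    (hs : ∀ v ∈ varsF t.rule.1, t'.sub v = t.sub v) :
    t'.out = t.out ∧ ∀ J : Set Atom, (t'.isOn J ↔ t.isOn J) := by
  have hcode : t'.code = t.code := by
    unfold Trigger.code
    rw [hr]
    congr 1
    congr 1
    apply Finset.image_congr
    intro v hv
    simp only
    rw [hs v hv]
  have hext : t'.extSub = t.extSub := by
    funext v
    unfold Trigger.extSub
    rw [hr, hcode]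
    by_cases h : v ∈ varsF t.rule.1
    · rw [if_pos h, if_pos h, hs v h]
    · rw [if_neg h, if_neg h]
  constructor
  · unfold Trigger.out
    rw [hr, hext]
  · intro J
    unfold Trigger.isOn
    rw [hr]
    constructor <;> intro h a ha
    · have := h a ha
      rwa [applyA_congr (fun v hv => (hs v (atomVarsF_subset_varsF ha hv)).symm)]
    · have := h a ha
      rwa [applyA_congr (fun v hv => hs v (atomVarsF_subset_varsF ha hv))]

/-! ### Enumeration of triggers up to equivalence -/

def trigOf (R : Rule) (s : Finset (Var × FTerm)) : Trigger :=
  ⟨R, fun v => if h : ∃ u, (v, u) ∈ s then h.choose else ct 0⟩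

def enumT (n : ℕ) : Option Trigger :=
  (Encodable.decode (α := Rule × Finset (Var × FTerm)) n).map fun p => trigOf p.1 p.2

lemma enumT_represents (t : Trigger) :
    ∃ n t', enumT n = some t' ∧ t'.rule = t.rule ∧
      ∀ v ∈ varsF t.rule.1, t'.sub v = t.sub v := by
  classical
  set s : Finset (Var × FTerm) := (varsF t.rule.1).image (fun v => (v, t.sub v)) with hs
  refine ⟨Encodable.encode ((t.rule, s) : Rule × Finset (Var × FTerm)), trigOf t.rule s,
    ?_, rfl, ?_⟩
  · simp [enumT, Encodable.encodek]
  · intro v hv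
    have hex : ∃ u, (v, u) ∈ s := ⟨t.sub v, Finset.mem_image.mpr ⟨v, hv, rfl⟩⟩
    show (if h : ∃ u, (v, u) ∈ s then h.choose else ct 0) = t.sub v
    rw [dif_pos hex]
    have hspec := hex.choose_spec
    rcases Finset.mem_image.mp hspec with ⟨v', _, heq⟩
    have h1 : v' = v := congrArg Prod.fst heq
    have h2 : t.sub v' = hex.choose := congrArg Prod.snd heq
    rw [h1] at h2
    exact h2.symm

end Stmt5
namespace Stmt5

/-! ### Construction of a fair oblivious derivation -/

def goodIdx (Rset : Finset Rule) (J : Set Atom) (n : ℕ) : Prop :=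
  ∃ t, enumT n = some t ∧ t.rule ∈ Rset ∧ t.isOn J ∧ ¬ ((t.out : Set Atom) ⊆ J)

def pick (Rset : Finset Rule) (J : Set Atom) : Option Trigger :=
  if h : ∃ n, goodIdx Rset J n then enumT (Nat.find h) else none

lemma pick_spec {Rset : Finset Rule} {J : Set Atom} {t : Trigger}
    (h : pick Rset J = some t) :
    t.rule ∈ Rset ∧ t.isOn J ∧ ¬ ((t.out : Set Atom) ⊆ J) := by
  unfold pick at h
  split at h
  · rename_i hex
    obtain ⟨t', het', hprops⟩ := Nat.find_spec hex
    rw [het'] at h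
    cases h
    exact hprops
  · exact absurd h (by simp)

def insts (Rset : Finset Rule) (I : Set Atom) : ℕ → Set Atom
  | 0 => I
  | n + 1 => insts Rset I n ∪
      (match pick Rset (insts Rset I n) with
        | none => (∅ : Set Atom)
        | some t => (t.out : Set Atom))

def Dsteps (Rset : Finset Rule) (I : Set Atom) (n : ℕ) : Option Trigger :=
  pick Rset (insts Rset I n)

lemma instSeq_Dsteps (Rset : Finset Rule) (I : Set Atom) :
    ∀ n, instSeq I (Dsteps Rset I) n = insts Rset I n := by
  intro n
  induction n with
  | zero => rfl
  | succ n IH =>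
    show instSeq I (Dsteps Rset I) n ∪ _ = _
    rw [IH]
    rfl

lemma insts_mono_succ (Rset : Finset Rule) (I : Set Atom) (n : ℕ) :
    insts Rset I n ⊆ insts Rset I (n + 1) := Set.subset_union_left

lemma insts_mono (Rset : Finset Rule) (I : Set Atom) {a b : ℕ} (h : a ≤ b) :
    insts Rset I a ⊆ insts Rset I b := by
  induction b with
  | zero => rw [Nat.le_zero.mp h]
  | succ b IH =>
    rcases Nat.lt_succ_iff_lt_or_eq.mp (Nat.lt_succ_of_le h) with h' | h'
    · exact (IH (Nat.lt_succ_iff.mp h')).trans (insts_mono_succ _ _ _)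
    · rw [h']

def myDeriv (Rset : Finset Rule) (I : Set Atom) : Deriv Rset I where
  steps := Dsteps Rset I
  prefix_closed := by
    intro n hn
    have hinst : insts Rset I (n + 1) = insts Rset I n := by
      show insts Rset I n ∪ _ = _
      rw [show pick Rset (insts Rset I n) = none from hn]
      simp
    show pick Rset (insts Rset I (n + 1)) = none
    rw [hinst]
    exact hn
  valid := by
    intro n t ht
    rw [instSeq_Dsteps]
    exact pick_spec ht

lemma myDeriv_inst (Rset : Finset Rule) (I : Set Atom) (n : ℕ) :
    (myDeriv Rset I).inst n = insts Rset I n := instSeq_Dsteps Rset I n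

lemma myDeriv_isX (Rset : Finset Rule) (I : Set Atom) : (myDeriv Rset I).IsX .O := by
  intro n t ht
  show ¬ ((t.out : Set Atom) ⊆ (myDeriv Rset I).inst n)
  rw [myDeriv_inst]
  exact (pick_spec ht).2.2

lemma myDeriv_fair (Rset : Finset Rule) (I : Set Atom) : (myDeriv Rset I).Fair .O := by
  intro i t htr hOn happ
  by_contra hno
  push_neg at hno
  obtain ⟨m, t', em, hrule, hsub⟩ := enumT_represents t
  obtain ⟨houteq, hOniff⟩ := trig_congr hrule hsub
  rw [myDeriv_inst] at hOn
  have happ' : ∀ j, i ≤ j → ¬ ((t.out : Set Atom) ⊆ insts Rset I j) := by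
    intro j hij
    rcases Nat.lt_or_ge i j with h | h
    · have := hno j h
      rw [myDeriv_inst] at this
      exact this
    · have hji : j = i := le_antisymm (Nat.le_of_lt_succ (Nat.lt_succ_of_le h)) hij
      subst hji
      show ¬ _
      have : Applicable .O t ((myDeriv Rset I).inst j) := happ
      rw [myDeriv_inst] at this
      exact this
  have hgood : ∀ j, i ≤ j → goodIdx Rset (insts Rset I j) m := by
    intro j hij
    refine ⟨t', em, hrule ▸ htr, (hOniff _).mpr (isOn_mono (insts_mono Rset I hij) hOn), ?_⟩
    rw [houteq]
    exact happ' j hij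
  have hex : ∀ j, i ≤ j → ∃ n, goodIdx Rset (insts Rset I j) n := fun j hij => ⟨m, hgood j hij⟩
  -- the chosen index at stage j
  let c : ℕ → ℕ := fun j => if h : ∃ n, goodIdx Rset (insts Rset I j) n then Nat.find h else 0
  have hc_le : ∀ j, i ≤ j → c j ≤ m := by
    intro j hij
    show (if h : _ then _ else _) ≤ m
    rw [dif_pos (hex j hij)]
    exact Nat.find_min' _ (hgood j hij)
  have hc_pick : ∀ j, i ≤ j → ∃ u, enumT (c j) = some u ∧ pick Rset (insts Rset I j) = some u ∧
      (u.out : Set Atom) ⊆ insts Rset I (j + 1) := by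
    intro j hij
    have hj := hex j hij
    have hspec := Nat.find_spec hj
    obtain ⟨u, heu, _⟩ := hspec
    have hcj : c j = Nat.find hj := dif_pos hj
    refine ⟨u, by rw [hcj]; exact heu, ?_, ?_⟩
    · unfold pick
      rw [dif_pos hj]
      exact heu
    · show (u.out : Set Atom) ⊆ insts Rset I j ∪ _
      rw [show pick Rset (insts Rset I j) = some u by unfold pick; rw [dif_pos hj]; exact heu]
      exact Set.subset_union_right
  have hdistinct : ∀ j j', i ≤ j → j < j' → c j ≠ c j' := by
    intro j j' hij hjj' heq
    obtain ⟨u, heu, _, hout⟩ := hc_pick j hij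
    have hij' : i ≤ j' := hij.trans (Nat.le_of_lt hjj')
    have hspec' := Nat.find_spec (hex j' hij')
    have hcj' : c j' = Nat.find (hex j' hij') := dif_pos (hex j' hij')
    obtain ⟨u', heu', _, _, hnotout⟩ := hspec'
    rw [← hcj', ← heq, heu] at heu'
    cases heu'
    exact hnotout (hout.trans (insts_mono Rset I hjj'))
  -- pigeonhole
  have hmaps : ∀ j ∈ Finset.Icc i (i + m + 1), c j ∈ Finset.range (m + 1) := by
    intro j hj
    rw [Finset.mem_Icc] at hj
    exact Finset.mem_range.mpr (Nat.lt_succ_of_le (hc_le j hj.1))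
  have hcard : (Finset.range (m + 1)).card < (Finset.Icc i (i + m + 1)).card := by
    rw [Finset.card_range, Nat.card_Icc]
    omega
  obtain ⟨a, ha, b, hb, hab, hcab⟩ :=
    Finset.exists_ne_map_eq_of_card_lt_of_maps_to hcard hmaps
  rw [Finset.mem_Icc] at ha hb
  rcases Nat.lt_or_ge a b with h | h
  · exact hdistinct a b ha.1 h hcab
  · have h' : b < a := lt_of_le_of_ne h (fun e => hab e.symm)
    exact hdistinct b a hb.1 h' hcab.symm

lemma exists_fair (Rset : Finset Rule) (I : Set Atom) :
    ∃ D : Deriv Rset I, D.IsX .O ∧ D.Fair .O :=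
  ⟨myDeriv Rset I, myDeriv_isX Rset I, myDeriv_fair Rset I⟩

/-! ### Result of any fair oblivious derivation is the closure -/

lemma finset_subset_chain {f : ℕ → Set Atom} (hm : ∀ a b : ℕ, a ≤ b → f a ⊆ f b)
    (s : Finset Atom) (hs : (s : Set Atom) ⊆ ⋃ n, f n) : ∃ n, (s : Set Atom) ⊆ f n := by
  classical
  induction s using Finset.induction with
  | empty => exact ⟨0, by simp⟩
  | @insert a s ha IH =>
    have has : a ∈ ⋃ n, f n := hs (by simp)
    obtain ⟨n1, hn1⟩ := Set.mem_iUnion.mp has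
    obtain ⟨n2, hn2⟩ := IH (fun x hx => hs (by simp only [Finset.coe_insert, Set.mem_insert_iff]; right; exact hx))
    refine ⟨max n1 n2, ?_⟩
    intro x hx
    rcases Set.mem_insert_iff.mp (by rwa [Finset.coe_insert] at hx) with h | h
    · subst h; exact hm n1 _ (le_max_left _ _) hn1
    · exact hm n2 _ (le_max_right _ _) (hn2 h)

lemma deriv_inst_mono {Rset : Finset Rule} {I : Set Atom} (D : Deriv Rset I)
    {a b : ℕ} (h : a ≤ b) : D.inst a ⊆ D.inst b := by
  induction b with
  | zero => rw [Nat.le_zero.mp h]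
  | succ b IH =>
    rcases Nat.lt_succ_iff_lt_or_eq.mp (Nat.lt_succ_of_le h) with h' | h'
    · exact (IH (Nat.lt_succ_iff.mp h')).trans Set.subset_union_left
    · rw [h']

lemma res_eq_ClO {Rset : Finset Rule} {I : Set Atom} (D : Deriv Rset I)
    (hX : D.IsX .O) (hF : D.Fair .O) : D.res = ClO Rset I := by
  apply Set.Subset.antisymm
  · apply Set.iUnion_subset
    intro n
    induction n with
    | zero => exact subset_ClO Rset I
    | succ n IH =>
      show instSeq I D.steps n ∪ _ ⊆ _
      apply Set.union_subset IH
      cases hsn : D.steps n with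
      | none => simp
      | some t =>
        obtain ⟨htr, hOn, _⟩ := D.valid n t hsn
        exact ClO_closed Rset I t htr (isOn_mono IH hOn)
  · apply ClO_min
    · exact fun a ha => Set.mem_iUnion.mpr ⟨0, ha⟩
    · intro t htr hOn
      set s : Finset Atom := t.rule.1.image (applyA t.sub) with hsdef
      have hs : (s : Set Atom) ⊆ ⋃ n, D.inst n := by
        intro a ha
        rw [hsdef, Finset.coe_image] at ha
        obtain ⟨b, hb, rfl⟩ := ha
        exact hOn b hb
      obtain ⟨n, hn⟩ := finset_subset_chain (fun a b h => deriv_inst_mono D h) s hs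
      have hOnn : t.isOn (D.inst n) := by
        intro a ha
        exact hn (by rw [hsdef, Finset.coe_image]; exact Set.mem_image_of_mem _ ha)
      by_cases hout : (t.out : Set Atom) ⊆ D.inst n
      · exact hout.trans (fun a ha => Set.mem_iUnion.mpr ⟨n, ha⟩)
      · obtain ⟨j, _, hj⟩ := hF n t htr hOnn hout
        have : (t.out : Set Atom) ⊆ D.inst j := not_not.mp hj
        exact this.trans (fun a ha => Set.mem_iUnion.mpr ⟨j, ha⟩)

lemma chO_eq (Rset : Finset Rule) (I : Set Atom) : ChX .O Rset I = ClO Rset I := by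
  unfold ChX
  rw [dif_pos (exists_fair Rset I)]
  exact res_eq_ClO _ (exists_fair Rset I).choose_spec.1 (exists_fair Rset I).choose_spec.2

end Stmt5
namespace Stmt5

def s0 : Atom := (pS0, [wC, wC])

lemma mem_spath_fst {x y b n : ℕ} {a : Atom} (h : a ∈ spath x y b n) : a.1 = pS := by
  simp only [spath, Finset.mem_image, Finset.mem_range] at h
  obtain ⟨j, _, rfl⟩ := h
  rfl

lemma rm_body_pS0 {M : TCM} {R : Rule} (hR : R ∈ RM M) {a : Atom} (ha : a ∈ R.1)
    (hfst : a.1 = pS0) : R = ruleS := by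
  simp only [RM, Finset.mem_union, Finset.mem_insert, Finset.mem_singleton,
    Finset.mem_biUnion, Finset.mem_range] at hR
  rcases hR with (rfl | rfl | rfl | rfl | rfl | rfl) | ⟨i, _, hR⟩
  · rfl
  · simp only [ruleFloodProp, Finset.mem_singleton] at ha
    subst ha; exact absurd hfst (by decide)
  · simp only [ruleSEnd, Finset.mem_singleton] at ha
    subst ha; exact absurd hfst (by decide)
  · have := mem_spath_fst (show a ∈ spath 0 1 10 2 from ha)
    rw [this] at hfst; exact absurd hfst (by decide)
  · simp only [ruleFloodGen, Finset.mem_insert, Finset.mem_singleton] at ha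
    rcases ha with rfl | rfl | rfl <;> exact absurd hfst (by decide)
  · simp only [ruleEx, Finset.mem_insert, Finset.mem_singleton] at ha
    rcases ha with rfl | rfl <;> exact absurd hfst (by decide)
  · rcases hR with rfl | rfl | rfl
    · simp only [ruleR, Finset.mem_insert, Finset.mem_singleton] at ha
      rcases ha with rfl | rfl
      · simp only [pR, pS0] at hfst; omega
      · exact absurd hfst (by decide)
    · rcases Finset.mem_union.mp (show a ∈ _ ∪ spath 2 4 (11 + M.ri i) (M.qi i) from ha) with h | h
      · rcases Finset.mem_union.mp h with h' | h'
        · simp only [Finset.mem_singleton] at h'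
          subst h'; simp only [pT, pS0] at hfst; omega
        · have := mem_spath_fst h'
          rw [this] at hfst; exact absurd hfst (by decide)
      · have := mem_spath_fst h
        rw [this] at hfst; exact absurd hfst (by decide)
    · simp only [ruleGStep, Finset.mem_insert, Finset.mem_singleton] at ha
      rcases ha with rfl | rfl | rfl
      · exact absurd hfst (by decide)
      · simp only [pR, pS0] at hfst; omega
      · simp only [pT, pS0] at hfst; omega

lemma closed_union_s0 {M : TCM} {Rset : Finset Rule} (hsub : Rset ⊆ RM M) {C : Set Atom}
    (hC : Closed Rset C) (hS : ((pS, [wC, wC]) : Atom) ∈ C) :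
    Closed Rset (C ∪ {s0}) := by
  intro t htr hOn
  by_cases hall : ∀ a ∈ t.rule.1, applyA t.sub a ∈ C
  · exact (hC t htr hall).trans Set.subset_union_left
  · push_neg at hall
    obtain ⟨a, ha, hnot⟩ := hall
    have hmem : applyA t.sub a ∈ C ∪ {s0} := hOn a ha
    have heq : applyA t.sub a = s0 := by
      rcases hmem with h | h
      · exact absurd h hnot
      · exact h
    have hfst : a.1 = pS0 := by
      have := congrArg Prod.fst heq
      simpa [applyA, s0] using this
    have hrS : t.rule = ruleS := rm_body_pS0 (hsub htr) ha hfst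
    rw [hrS] at ha
    have ha' : a = (pS0, [vt 0, vt 1]) := by simpa [ruleS] using ha
    subst ha'
    have hsnd := congrArg Prod.snd heq
    simp only [applyA, s0, List.map_cons, List.map_nil] at hsnd
    have hsub0 : applyT t.sub (vt 0) = wC := (List.cons.injEq _ _ _ _ ▸ hsnd).1
    have hsub1 : applyT t.sub (vt 1) = wC := by
      have := (List.cons.injEq _ _ _ _ ▸ hsnd).2
      exact (List.cons.injEq _ _ _ _ ▸ this).1
    have h0 : (Sum.inl 0 : Var) ∈ varsF ruleS.1 := by decide
    have h1 : (Sum.inl 1 : Var) ∈ varsF ruleS.1 := by decide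
    have hext0 : t.extSub (Sum.inl 0) = wC := by
      unfold Trigger.extSub
      rw [hrS, if_pos h0]
      exact hsub0
    have hext1 : t.extSub (Sum.inl 1) = wC := by
      unfold Trigger.extSub
      rw [hrS, if_pos h1]
      exact hsub1
    have hout : t.out = {((pS, [wC, wC]) : Atom)} := by
      unfold Trigger.out
      rw [hrS]
      rw [show ruleS.2 = {((pS, [vt 0, vt 1]) : Atom)} from rfl]
      rw [Finset.image_singleton]
      simp [applyA, applyT, vt, hext0, hext1]
    rw [hout]
    intro x hx
    simp only [Finset.coe_singleton, Set.mem_singleton_iff] at hx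
    subst hx
    exact Or.inl hS

lemma ClO_union_s0 {M : TCM} {Rset : Finset Rule} (hsub : Rset ⊆ RM M) {A : Set Atom}
    (hS : ((pS, [wC, wC]) : Atom) ∈ A) :
    ClO Rset (A ∪ {s0}) = ClO Rset A ∪ {s0} := by
  apply Set.Subset.antisymm
  · exact ClO_min (Set.union_subset_union_left _ (subset_ClO _ _))
      (closed_union_s0 hsub (ClO_closed _ _) (subset_ClO _ _ hS))
  · exact Set.union_subset (ClO_mono Set.subset_union_left)
      (fun x hx => subset_ClO _ _ (Set.mem_union_right _ hx))

end Stmt5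
namespace Stmt5

def wsub : Subst := fun _ => wC

lemma closed_step {Rset : Finset Rule} {C : Set Atom} (hC : Closed Rset C) {R : Rule}
    (hR : R ∈ Rset) (σ : Subst) (hbody : ∀ a ∈ R.1, applyA σ a ∈ C) {b : Atom}
    (hb : b ∈ R.2) : applyA (Trigger.extSub ⟨R, σ⟩) b ∈ C := by
  have hOn : Trigger.isOn ⟨R, σ⟩ C := fun a ha => hbody a ha
  exact hC ⟨R, σ⟩ hR hOn (Finset.mem_coe.mpr (Finset.mem_image_of_mem _ hb))

lemma extSub_w {R : Rule} {b : Atom} (hb : atomVarsF b ⊆ varsF R.1) :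
    applyA (Trigger.extSub ⟨R, wsub⟩) b = applyA wsub b :=
  applyA_congr (fun v hv => by
    show Trigger.extSub _ v = wC
    unfold Trigger.extSub
    rw [if_pos (hb hv)]
    rfl)

lemma ruleSEnd_mem (M : TCM) : ruleSEnd ∈ DatRules (RM M) :=
  Finset.mem_filter.mpr ⟨Finset.mem_union_left _ (by simp), by decide⟩

lemma ruleFloodProp_mem (M : TCM) : ruleFloodProp ∈ DatRules (RM M) :=
  Finset.mem_filter.mpr ⟨Finset.mem_union_left _ (by simp), by decide⟩

lemma ruleFloodGen_mem (M : TCM) : ruleFloodGen M ∈ DatRules (RM M) := by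
  apply Finset.mem_filter.mpr
  refine ⟨Finset.mem_union_left _ (by simp), ?_⟩
  intro v hv
  obtain ⟨a, ha, hva⟩ := Finset.mem_biUnion.mp hv
  have hbodyv : varsF (ruleFloodGen M).1 = ({Sum.inl 0, Sum.inl 1, Sum.inl 2} : Finset Var) := by
    show varsF ({(pFlood, [vt 0]), (pFlood, [vt 1]), (pFlood, [vt 2])} : Finset Atom) = _
    decide
  rw [hbodyv]
  rcases Finset.mem_union.mp ha with h | h
  · rw [Finset.mem_singleton.mp h] at hva
    have he : atomVarsF ((pG, [vt 0, vt 1]) : Atom) = ({Sum.inl 0, Sum.inl 1} : Finset Var) := by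
      decide
    rw [he] at hva
    simp only [Finset.mem_insert, Finset.mem_singleton] at hva ⊢
    tauto
  · obtain ⟨j, _, hmem⟩ := Finset.mem_biUnion.mp h
    rcases Finset.mem_insert.mp hmem with rfl | hmem'
    · have he : atomVarsF ((pR j, [vt 0, vt 1]) : Atom) = ({Sum.inl 0, Sum.inl 1} : Finset Var) :=
        rfl
      rw [he] at hva
      simp only [Finset.mem_insert, Finset.mem_singleton] at hva ⊢
      tauto
    · rw [Finset.mem_singleton.mp hmem'] at hva
      have he : atomVarsF ((pT j, [vt 0, vt 1, vt 2]) : Atom)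
          = ({Sum.inl 0, Sum.inl 1, Sum.inl 2} : Finset Var) := rfl
      rw [he] at hva
      exact hva

lemma IE_facts (M : TCM) :
    ((pEnd, [wC]) : Atom) ∈ ClO (DatRules (RM M)) IE ∧
    ((pS, [wC, wC]) : Atom) ∈ ClO (DatRules (RM M)) IE ∧
    ((pFlood, [wC]) : Atom) ∈ ClO (DatRules (RM M)) IE ∧
    ((pG, [wC, wC]) : Atom) ∈ ClO (DatRules (RM M)) IE ∧
    (∀ j < M.p, ((pR j, [wC, wC]) : Atom) ∈ ClO (DatRules (RM M)) IE) ∧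
    (∀ j < M.p, ((pT j, [wC, wC, wC]) : Atom) ∈ ClO (DatRules (RM M)) IE) := by
  have hclosed := ClO_closed (DatRules (RM M)) IE
  have hEnd : ((pEnd, [wC]) : Atom) ∈ ClO (DatRules (RM M)) IE := subset_ClO _ _ rfl
  have hS : ((pS, [wC, wC]) : Atom) ∈ ClO (DatRules (RM M)) IE := by
    have h := closed_step hclosed (ruleSEnd_mem M) wsub
      (by
        intro a ha
        have ha' : a = ((pEnd, [vt 0]) : Atom) := by simpa [ruleSEnd] using ha
        subst ha'
        exact hEnd)
      (show ((pS, [vt 0, vt 0]) : Atom) ∈ ruleSEnd.2 from by decide)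
    rw [extSub_w (by decide)] at h
    exact h
  have hFl : ((pFlood, [wC]) : Atom) ∈ ClO (DatRules (RM M)) IE := by
    have h := closed_step hclosed (ruleFloodProp_mem M) wsub
      (by
        intro a ha
        have ha' : a = ((pS, [vt 0, vt 1]) : Atom) := by simpa [ruleFloodProp] using ha
        subst ha'
        exact hS)
      (show ((pFlood, [vt 1]) : Atom) ∈ ruleFloodProp.2 from by decide)
    rw [extSub_w (by decide)] at h
    exact h
  have hbodyFG : ∀ a ∈ (ruleFloodGen M).1, applyA wsub a ∈ ClO (DatRules (RM M)) IE := by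
    intro a ha
    have ha' : a = ((pFlood, [vt 0]) : Atom) ∨ a = ((pFlood, [vt 1]) : Atom) ∨
        a = ((pFlood, [vt 2]) : Atom) := by simpa [ruleFloodGen] using ha
    rcases ha' with rfl | rfl | rfl <;> exact hFl
  have hG : ((pG, [wC, wC]) : Atom) ∈ ClO (DatRules (RM M)) IE := by
    have h := closed_step hclosed (ruleFloodGen_mem M) wsub hbodyFG
      (Finset.mem_union_left _ (Finset.mem_singleton_self _))
    rw [extSub_w (show atomVarsF ((pG, [vt 0, vt 1]) : Atom)
      ⊆ varsF ({(pFlood, [vt 0]), (pFlood, [vt 1]), (pFlood, [vt 2])} : Finset Atom)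
      from by decide)] at h
    exact h
  have hR : ∀ j < M.p, ((pR j, [wC, wC]) : Atom) ∈ ClO (DatRules (RM M)) IE := by
    intro j hj
    have hmem : ((pR j, [vt 0, vt 1]) : Atom) ∈ (ruleFloodGen M).2 :=
      Finset.mem_union_right _ (Finset.mem_biUnion.mpr ⟨j, Finset.mem_range.mpr hj, by simp⟩)
    have h := closed_step hclosed (ruleFloodGen_mem M) wsub hbodyFG hmem
    have hsubv : atomVarsF ((pR j, [vt 0, vt 1]) : Atom) ⊆ varsF (ruleFloodGen M).1 := by
      have he : atomVarsF ((pR j, [vt 0, vt 1]) : Atom)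
          = ({Sum.inl 0, Sum.inl 1} : Finset Var) := rfl
      rw [he]
      show _ ⊆ varsF ({(pFlood, [vt 0]), (pFlood, [vt 1]), (pFlood, [vt 2])} : Finset Atom)
      decide
    rw [extSub_w hsubv] at h
    exact h
  have hT : ∀ j < M.p, ((pT j, [wC, wC, wC]) : Atom) ∈ ClO (DatRules (RM M)) IE := by
    intro j hj
    have hmem : ((pT j, [vt 0, vt 1, vt 2]) : Atom) ∈ (ruleFloodGen M).2 :=
      Finset.mem_union_right _ (Finset.mem_biUnion.mpr ⟨j, Finset.mem_range.mpr hj, by simp⟩)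
    have h := closed_step hclosed (ruleFloodGen_mem M) wsub hbodyFG hmem
    have hsubv : atomVarsF ((pT j, [vt 0, vt 1, vt 2]) : Atom) ⊆ varsF (ruleFloodGen M).1 := by
      have he : atomVarsF ((pT j, [vt 0, vt 1, vt 2]) : Atom)
          = ({Sum.inl 0, Sum.inl 1, Sum.inl 2} : Finset Var) := rfl
      rw [he]
      show _ ⊆ varsF ({(pFlood, [vt 0]), (pFlood, [vt 1]), (pFlood, [vt 2])} : Finset Atom)
      decide
    rw [extSub_w hsubv] at h
    exact h
  exact ⟨hEnd, hS, hFl, hG, hR, hT⟩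

lemma list1 {l : List FTerm} (h1 : l.length = 1) (hw : ∀ t ∈ l, t = wC) : l = [wC] := by
  match l, h1 with
  | [x], _ => rw [hw x (by simp)]

lemma list2 {l : List FTerm} (h1 : l.length = 2) (hw : ∀ t ∈ l, t = wC) : l = [wC, wC] := by
  match l, h1 with
  | [x, y], _ => rw [hw x (by simp), hw y (by simp)]

lemma list3 {l : List FTerm} (h1 : l.length = 3) (hw : ∀ t ∈ l, t = wC) :
    l = [wC, wC, wC] := by
  match l, h1 with
  | [x, y, z], _ => rw [hw x (by simp), hw y (by simp), hw z (by simp)]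

lemma crit_subset (M : TCM) : Crit M ⊆ ClO (DatRules (RM M)) IE ∪ {s0} := by
  obtain ⟨hEnd, hS, hFl, hG, hR, hT⟩ := IE_facts M
  rintro ⟨p, l⟩ ⟨hsig, hw⟩
  rcases hsig with ⟨hp, hlen⟩ | ⟨hp, hlen⟩ | ⟨hp, hlen⟩
  · have hl : l = [wC] := list1 hlen hw
    subst hl
    rcases hp with rfl | rfl
    · exact Or.inl hEnd
    · exact Or.inl hFl
  · have hl : l = [wC, wC] := list2 hlen hw
    subst hl
    rcases hp with rfl | rfl | rfl | ⟨i, hi, rfl⟩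
    · exact Or.inr rfl
    · exact Or.inl hS
    · exact Or.inl hG
    · exact Or.inl (hR i hi)
  · obtain ⟨i, hi, rfl⟩ := hp
    have hl : l = [wC, wC, wC] := list3 hlen hw
    subst hl
    exact Or.inl (hT i hi)

lemma IE_subset_crit (M : TCM) : IE ⊆ Crit M := by
  intro a ha
  have h : a = ((pEnd, [wC]) : Atom) := ha
  subst h
  refine ⟨Or.inl ⟨Or.inl rfl, rfl⟩, ?_⟩
  intro t ht
  simp only [List.mem_singleton] at ht
  exact ht

lemma s0_mem_crit (M : TCM) : s0 ∈ Crit M := by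
  refine ⟨Or.inr (Or.inl ⟨Or.inl rfl, rfl⟩), ?_⟩
  intro t ht
  simp only [s0, List.mem_cons, List.mem_singleton] at ht
  rcases ht with rfl | rfl | h
  · rfl
  · rfl
  · exact absurd h List.not_mem_nil

lemma base_eq (M : TCM) :
    ClO (DatRules (RM M)) (Crit M) = ClO (DatRules (RM M)) IE ∪ {s0} := by
  apply Set.Subset.antisymm
  · exact ClO_min (crit_subset M)
      (closed_union_s0 (show DatRules (RM M) ⊆ RM M from Finset.filter_subset _ _) (ClO_closed _ _) (IE_facts M).2.1)
  · refine Set.union_subset (ClO_mono (IE_subset_crit M)) ?_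
    intro x hx
    rw [Set.mem_singleton_iff.mp hx]
    exact subset_ClO _ _ (s0_mem_crit M)

lemma step_eq (M : TCM) (n : ℕ) :
    StepX .O M n (Crit M) = StepX .O M n IE ∪ {s0} ∧
    ((pS, [wC, wC]) : Atom) ∈ StepX .O M n IE := by
  induction n with
  | zero =>
    constructor
    · show ChX .O (DatRules (RM M)) (Crit M) = ChX .O (DatRules (RM M)) IE ∪ {s0}
      rw [chO_eq, chO_eq]
      exact base_eq M
    · show ((pS, [wC, wC]) : Atom) ∈ ChX .O (DatRules (RM M)) IE
      rw [chO_eq]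
      exact (IE_facts M).2.1
  | succ n IH =>
    obtain ⟨IH1, IH2⟩ := IH
    have e1 : StepX .O M (n + 1) (Crit M)
        = ClO (DatRules (RM M)) (ClO (NDatRules (RM M)) (StepX .O M n (Crit M))) := by
      show ChX .O _ (ChX .O _ _) = _
      rw [chO_eq, chO_eq]
    have e2 : StepX .O M (n + 1) IE
        = ClO (DatRules (RM M)) (ClO (NDatRules (RM M)) (StepX .O M n IE)) := by
      show ChX .O _ (ChX .O _ _) = _
      rw [chO_eq, chO_eq]
    have hS' : ((pS, [wC, wC]) : Atom) ∈ ClO (NDatRules (RM M)) (StepX .O M n IE) :=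
      subset_ClO _ _ IH2
    constructor
    · rw [e1, e2, IH1,
        ClO_union_s0 (show NDatRules (RM M) ⊆ RM M from Finset.filter_subset _ _) IH2,
        ClO_union_s0 (show DatRules (RM M) ⊆ RM M from Finset.filter_subset _ _) hS']
    · rw [e2]
      exact subset_ClO _ _ hS'

lemma applyA_idsub (a : Atom) : applyA (fun v => Sum.inr v) a = a := by
  have h : applyT (fun v => Sum.inr v) = id := funext (fun x => by cases x <;> rfl)
  simp [applyA, h]

end Stmt5
/-- `Crit_n` is isomorphic to `Step^O_n({End(w)}) ∪ {S₀(w,w)}`. -/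
theorem stmt_5 (M : TCM) (n : ℕ) :
    Isomorphic (StepX ChaseVariant.O M n (Crit M))
      (StepX ChaseVariant.O M n IE ∪ {(pS0, [wC, wC])}) := by
  have heq : StepX ChaseVariant.O M n (Crit M)
      = StepX ChaseVariant.O M n IE ∪ {((pS0, [wC, wC]) : Atom)} := (Stmt5.step_eq M n).1
  refine ⟨fun v => Sum.inr v, fun v => Sum.inr v, ?_, ?_, ?_, ?_⟩
  · intro a ha
    rw [Stmt5.applyA_idsub]
    rw [heq] at ha
    exact ha
  · intro a ha
    rw [Stmt5.applyA_idsub, heq]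
    exact ha
  · intro a _
    rw [Stmt5.applyA_idsub, Stmt5.applyA_idsub]
  · intro a _
    rw [Stmt5.applyA_idsub, Stmt5.applyA_idsub]

end
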